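/- Let K be an algebraically closed field of characteristic 2 and B ∈ K[x₁,x₂,x₃]₄ a homogeneous quartic polynomial. If the critical locus 𝒞_B = {x ∈ ℙ²(K) : ∇B(x) = 0} is finite, then 𝒞_B consists of at most 7 points. -/

import Mathlib

open MvPolynomial

set_option linter.unusedSectionVars false
set_option linter.unusedTactic false
set_option linter.unreachableTactic false
set_option maxHeartbeats 1000000

noncomputable section AuxPoly

variable {K : Type*} [Field K]


lemma coeff_pderiv3 (i : Fin 3) (p : MvPolynomial (Fin 3) K) (m : Fin 3 →₀ ℕ) :
    coeff m (pderiv i p) = (m i + 1 : ℕ) * coeff (m + Finsupp.single i 1) p := by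
  induction p using MvPolynomial.induction_on' with
  | monomial s a =>
    rw [pderiv_monomial, coeff_monomial, coeff_monomial]
    rcases Nat.eq_zero_or_pos (s i) with h0 | hpos
    · have h1 : s ≠ m + Finsupp.single i 1 := by
        intro h; apply absurd h0
        have := DFunLike.congr_fun h i
        simp at this; omega
      rw [if_neg h1]
      split <;> simp [h0]
    · have key : (s - Finsupp.single i 1 = m) ↔ (s = m + Finsupp.single i 1) := by
        constructor
        · rintro rfl; ext j
          rcases eq_or_ne j i with rfl | hj
          · simp [Finsupp.single_apply]; omega
          · simp [Finsupp.single_apply, Ne.symm hj]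
        · rintro rfl; ext j
          rcases eq_or_ne j i with rfl | hj
          · simp [Finsupp.single_apply]
          · simp [Finsupp.single_apply, Ne.symm hj]
      by_cases h : s = m + Finsupp.single i 1
      · rw [if_pos (key.mpr h), if_pos h]
        have hx : s i = m i + 1 := by
          have := DFunLike.congr_fun h i; simpa using this
        rw [hx]; ring
      · rw [if_neg (fun hh => h (key.mp hh)), if_neg h, mul_zero]
  | add p q hp hq => simp [map_add, coeff_add, hp, hq, mul_add]

variable [CharP K 2]

/-- In characteristic two, second partial derivatives in the same variable vanish. -/
lemma pderiv_pderiv_self (i : Fin 3) (p : MvPolynomial (Fin 3) K) :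
    pderiv i (pderiv i p) = 0 := by
  apply MvPolynomial.ext
  intro m
  rw [coeff_pderiv3, coeff_pderiv3, coeff_zero, ← mul_assoc]
  have h1 : ((m + Finsupp.single i 1 : Fin 3 →₀ ℕ)) i = m i + 1 := by simp
  rw [h1]
  have h2 : ((m i + 1 : ℕ) : K) * ((m i + 1 + 1 : ℕ) : K) = 0 := by
    have : ((m i + 1) * (m i + 1 + 1) : ℕ) % 2 = 0 := by
      rcases Nat.even_or_odd (m i) with ⟨k, hk⟩ | ⟨k, hk⟩ <;> rw [hk, Nat.mul_mod]
      · have h5 : (k + k + 1 + 1) % 2 = 0 := by omega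
        rw [h5, mul_zero, Nat.zero_mod]
      · have h5 : (2 * k + 1 + 1) % 2 = 0 := by omega
        rw [h5, zero_mul, Nat.zero_mod]
    have hdvd : (2 : ℕ) ∣ (m i + 1) * (m i + 1 + 1) := Nat.dvd_of_mod_eq_zero this
    have := (CharP.cast_eq_zero_iff K 2 ((m i + 1) * (m i + 1 + 1))).mpr hdvd
    push_cast at this
    push_cast
    linear_combination this
  rw [h2, zero_mul]

/-- Mixed second partials commute (coefficientwise proof). -/
lemma pderiv_pderiv_comm (i j : Fin 3) (p : MvPolynomial (Fin 3) K) :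
    pderiv i (pderiv j p) = pderiv j (pderiv i p) := by
  rcases eq_or_ne i j with rfl | hij
  · rfl
  apply MvPolynomial.ext
  intro m
  rw [coeff_pderiv3, coeff_pderiv3, coeff_pderiv3, coeff_pderiv3]
  have h1 : ((m + Finsupp.single i 1 : Fin 3 →₀ ℕ)) j = m j := by
    simp [Finsupp.single_apply, hij]
  have h2 : ((m + Finsupp.single j 1 : Fin 3 →₀ ℕ)) i = m i := by
    simp [Finsupp.single_apply, Ne.symm hij]
  rw [h1, h2]
  have h3 : m + Finsupp.single i 1 + Finsupp.single j 1
      = m + Finsupp.single j 1 + Finsupp.single i 1 := by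
    rw [add_assoc, add_assoc, add_comm (Finsupp.single i 1)]
  rw [h3]; ring

lemma degree3 (d : Fin 3 →₀ ℕ) : d.degree = d 0 + d 1 + d 2 := by
  rw [Finsupp.degree_apply]
  rw [Finset.sum_subset (Finset.subset_univ _)
    (fun x _ hx => Finsupp.notMem_support_iff.mp hx)]
  exact Fin.sum_univ_three _

lemma sub_add_single (m : Fin 3 →₀ ℕ) (j : Fin 3) (hj : m j ≠ 0) :
    m - Finsupp.single j 1 + Finsupp.single j 1 = m := by
  ext l
  rcases eq_or_ne l j with rfl | hl
  · simp [Finsupp.single_apply]; omega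
  · simp [Finsupp.single_apply, Ne.symm hl]

lemma three_eq_one : (3 : K) = 1 := by
  have := CharP.cast_eq_zero K 2
  linear_combination this

/-- Euler's identity in characteristic 2 for a polynomial whose nonzero coefficients
all sit in odd total degree `3`. -/
lemma euler_char2 (F : MvPolynomial (Fin 3) K)
    (hF : ∀ d : Fin 3 →₀ ℕ, coeff d F ≠ 0 → d 0 + d 1 + d 2 = 3) :
    (∑ j : Fin 3, X j * pderiv j F) = F := by
  apply MvPolynomial.ext
  intro m
  rw [coeff_sum]
  have hterm : ∀ j : Fin 3, coeff m (X j * pderiv j F) = (m j : K) * coeff m F := by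
    intro j
    classical
    rw [coeff_X_mul']
    by_cases hj : j ∈ m.support
    · rw [if_pos hj]
      rw [coeff_pderiv3]
      have hj' : m j ≠ 0 := Finsupp.mem_support_iff.mp hj
      rw [sub_add_single m j hj']
      have h2 : ((m - Finsupp.single j 1 : Fin 3 →₀ ℕ)) j = m j - 1 := by
        simp [Finsupp.single_apply]
      rw [h2]
      congr 1
      have : m j - 1 + 1 = m j := by omega
      rw [this]
    · rw [if_neg hj]
      have : m j = 0 := Finsupp.notMem_support_iff.mp hj
      rw [this]
      simp
  rw [Finset.sum_congr rfl (fun j _ => hterm j)]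
  rw [← Finset.sum_mul, Fin.sum_univ_three]
  by_cases hc : coeff m F = 0
  · simp [hc]
  · have h3 := hF m hc
    push_cast [← h3]
    rw [← Nat.cast_add, ← Nat.cast_add, h3]
    push_cast
    rw [three_eq_one, one_mul]

lemma helper_single (m : Fin 3 →₀ ℕ) (h0 : m 0 + m 1 + m 2 = 2) (l : Fin 3) (h : m l = 2) :
    m = Finsupp.single l 2 := by
  ext l'
  fin_cases l <;> fin_cases l' <;>
    simp_all [Finsupp.single_apply] <;> omega

variable (B : MvPolynomial (Fin 3) K) (hB : B.IsHomogeneous 4)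

/-- the mixed second partials of a quartic in char 2 are combinations of squares -/
lemma qstruct (i j : Fin 3) (hij : i ≠ j) (hB : B.IsHomogeneous 4) :
    ∃ a : Fin 3 → K, ∀ x : Fin 3 → K,
      eval x (pderiv i (pderiv j B)) = ∑ l : Fin 3, a l * x l ^ 2 := by
  classical
  set q := pderiv i (pderiv j B) with hq
  have hsupp : ∀ m : Fin 3 →₀ ℕ, coeff m q ≠ 0 → ∃ l, m = Finsupp.single l 2 := by
    intro m hm
    rw [hq, coeff_pderiv3, coeff_pderiv3] at hm
    have h1 : ((m i + 1 : ℕ) : K) ≠ 0 := fun h => hm (by rw [h, zero_mul])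
    have h2 : (((m + Finsupp.single i 1 : Fin 3 →₀ ℕ) j + 1 : ℕ) : K) ≠ 0 := by
      intro h
      apply hm
      rw [h, zero_mul, mul_zero]
    have h3 : coeff (m + Finsupp.single i 1 + Finsupp.single j 1) B ≠ 0 := by
      intro h
      apply hm
      rw [h, mul_zero, mul_zero]
    have hmj : ((m + Finsupp.single i 1 : Fin 3 →₀ ℕ)) j = m j := by
      simp [Finsupp.single_apply, hij]
    rw [hmj] at h2
    -- parity
    have hpar : ∀ n : ℕ, ((n + 1 : ℕ) : K) ≠ 0 → n % 2 = 0 := by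
      intro n hn
      by_contra hodd
      apply hn
      rw [CharP.cast_eq_zero_iff K 2]
      omega
    have hie : m i % 2 = 0 := hpar _ h1
    have hje : m j % 2 = 0 := hpar _ h2
    -- degree
    have hdeg : (m + Finsupp.single i 1 + Finsupp.single j 1).degree = 4 := by
      by_contra h
      exact h3 (hB.coeff_eq_zero h)
    rw [degree3] at hdeg
    have hsum : m 0 + m 1 + m 2 = 2 := by
      have e0 : ((m + Finsupp.single i 1 + Finsupp.single j 1 : Fin 3 →₀ ℕ)) 0
          = m 0 + (Finsupp.single i 1 : Fin 3 →₀ ℕ) 0 + (Finsupp.single j 1 : Fin 3 →₀ ℕ) 0 := by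
        simp
      have e1 : ((m + Finsupp.single i 1 + Finsupp.single j 1 : Fin 3 →₀ ℕ)) 1
          = m 1 + (Finsupp.single i 1 : Fin 3 →₀ ℕ) 1 + (Finsupp.single j 1 : Fin 3 →₀ ℕ) 1 := by
        simp
      have e2 : ((m + Finsupp.single i 1 + Finsupp.single j 1 : Fin 3 →₀ ℕ)) 2
          = m 2 + (Finsupp.single i 1 : Fin 3 →₀ ℕ) 2 + (Finsupp.single j 1 : Fin 3 →₀ ℕ) 2 := by
        simp
      rw [e0, e1, e2] at hdeg
      have hi1 : (Finsupp.single i 1 : Fin 3 →₀ ℕ) 0 + (Finsupp.single i 1 : Fin 3 →₀ ℕ) 1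
          + (Finsupp.single i 1 : Fin 3 →₀ ℕ) 2 = 1 := by
        fin_cases i <;> simp [Finsupp.single_apply]
      have hj1 : (Finsupp.single j 1 : Fin 3 →₀ ℕ) 0 + (Finsupp.single j 1 : Fin 3 →₀ ℕ) 1
          + (Finsupp.single j 1 : Fin 3 →₀ ℕ) 2 = 1 := by
        fin_cases j <;> simp [Finsupp.single_apply]
      omega
    -- conclude
    have : m 0 = 2 ∨ m 1 = 2 ∨ m 2 = 2 := by
      have hcases : ∀ l : Fin 3, l = 0 ∨ l = 1 ∨ l = 2 := by decide
      rcases hcases i with rfl | rfl | rfl <;> rcases hcases j with rfl | rfl | rfl <;>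
        (try exact absurd rfl hij) <;> omega
    rcases this with h | h | h
    · exact ⟨0, helper_single m hsum 0 h⟩
    · exact ⟨1, helper_single m hsum 1 h⟩
    · exact ⟨2, helper_single m hsum 2 h⟩
  refine ⟨fun l => coeff (Finsupp.single l 2) q, ?_⟩
  intro x
  rw [eval_eq']
  set T : Finset (Fin 3 →₀ ℕ) := Finset.image (fun l => Finsupp.single l 2) Finset.univ with hT
  have hsubT : q.support ⊆ T := by
    intro m hm
    obtain ⟨l, rfl⟩ := hsupp m (Finsupp.mem_support_iff.mp hm)
    exact Finset.mem_image_of_mem _ (Finset.mem_univ l)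
  rw [Finset.sum_subset hsubT (fun d _ hd => by
    rw [MvPolynomial.notMem_support_iff.mp hd, zero_mul])]
  rw [hT, Finset.sum_image (fun a _ b _ h => Finsupp.single_left_injective (by norm_num) h)]
  apply Finset.sum_congr rfl
  intro l _
  congr 1
  rw [Finset.prod_eq_single l (fun b _ hb => by
      rw [Finsupp.single_apply, if_neg (fun h => hb h.symm), pow_zero])
    (fun h => absurd (Finset.mem_univ l) h)]
  rw [Finsupp.single_apply, if_pos rfl]

lemma pderiv_homog_coeff (hB : B.IsHomogeneous 4) (i : Fin 3) :
    ∀ d : Fin 3 →₀ ℕ, coeff d (pderiv i B) ≠ 0 → d 0 + d 1 + d 2 = 3 := by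
  intro d hd
  rw [coeff_pderiv3] at hd
  have h3 : coeff (d + Finsupp.single i 1) B ≠ 0 := fun h => hd (by rw [h, mul_zero])
  have hdeg : (d + Finsupp.single i 1).degree = 4 := by
    by_contra h
    exact h3 (hB.coeff_eq_zero h)
  rw [degree3] at hdeg
  have e0 : ((d + Finsupp.single i 1 : Fin 3 →₀ ℕ)) 0
      = d 0 + (Finsupp.single i 1 : Fin 3 →₀ ℕ) 0 := by simp
  have e1 : ((d + Finsupp.single i 1 : Fin 3 →₀ ℕ)) 1
      = d 1 + (Finsupp.single i 1 : Fin 3 →₀ ℕ) 1 := by simp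
  have e2 : ((d + Finsupp.single i 1 : Fin 3 →₀ ℕ)) 2
      = d 2 + (Finsupp.single i 1 : Fin 3 →₀ ℕ) 2 := by simp
  rw [e0, e1, e2] at hdeg
  have hi1 : (Finsupp.single i 1 : Fin 3 →₀ ℕ) 0 + (Finsupp.single i 1 : Fin 3 →₀ ℕ) 1
      + (Finsupp.single i 1 : Fin 3 →₀ ℕ) 2 = 1 := by
    fin_cases i <;> simp [Finsupp.single_apply]
  omega

lemma euler_eval (hB : B.IsHomogeneous 4) (i : Fin 3) (x : Fin 3 → K) :
    eval x (pderiv i B) = ∑ j : Fin 3, x j * eval x (pderiv j (pderiv i B)) := by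
  conv_lhs => rw [← euler_char2 (pderiv i B) (pderiv_homog_coeff B hB i)]
  rw [map_sum]
  apply Finset.sum_congr rfl
  intro j _
  rw [eval_mul, eval_X]

theorem exists_matrix (hB : B.IsHomogeneous 4) :
    ∃ N : Matrix (Fin 3) (Fin 3) K, ∀ x : Fin 3 → K, x ≠ 0 →
      ((∀ i, eval x (pderiv i B) = 0) ↔
        ∃ c : K, N.mulVec (fun l => x l ^ 2) = c • x) := by
  obtain ⟨a0, ha0⟩ := qstruct B 1 2 (by decide) hB
  obtain ⟨a1, ha1⟩ := qstruct B 0 2 (by decide) hB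
  obtain ⟨a2, ha2⟩ := qstruct B 0 1 (by decide) hB
  refine ⟨Matrix.of ![a0, a1, a2], ?_⟩
  intro x hx
  have hcases : ∀ l : Fin 3, l = 0 ∨ l = 1 ∨ l = 2 := by decide
  have hm0 : (Matrix.of ![a0, a1, a2]).mulVec (fun l => x l ^ 2) 0
      = eval x (pderiv 1 (pderiv 2 B)) := by
    rw [ha0 x]
    simp [Matrix.mulVec, dotProduct]
  have hm1 : (Matrix.of ![a0, a1, a2]).mulVec (fun l => x l ^ 2) 1
      = eval x (pderiv 0 (pderiv 2 B)) := by
    rw [ha1 x]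
    simp [Matrix.mulVec, dotProduct]
  have hm2 : (Matrix.of ![a0, a1, a2]).mulVec (fun l => x l ^ 2) 2
      = eval x (pderiv 0 (pderiv 1 B)) := by
    rw [ha2 x]
    simp [Matrix.mulVec, dotProduct]
  -- Euler expansions
  have e0 : eval x (pderiv 0 B)
      = x 1 * eval x (pderiv 0 (pderiv 1 B)) + x 2 * eval x (pderiv 0 (pderiv 2 B)) := by
    rw [euler_eval B hB 0 x, Fin.sum_univ_three, pderiv_pderiv_self, map_zero, mul_zero, zero_add,
      pderiv_pderiv_comm 1 0, pderiv_pderiv_comm 2 0]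
  have e1 : eval x (pderiv 1 B)
      = x 0 * eval x (pderiv 0 (pderiv 1 B)) + x 2 * eval x (pderiv 1 (pderiv 2 B)) := by
    rw [euler_eval B hB 1 x, Fin.sum_univ_three, pderiv_pderiv_self, map_zero, mul_zero, add_zero,
      pderiv_pderiv_comm 2 1]
  have e2 : eval x (pderiv 2 B)
      = x 0 * eval x (pderiv 0 (pderiv 2 B)) + x 1 * eval x (pderiv 1 (pderiv 2 B)) := by
    rw [euler_eval B hB 2 x, Fin.sum_univ_three, pderiv_pderiv_self, map_zero, mul_zero, add_zero]
  have htwo : (2 : K) = 0 := CharP.cast_eq_zero K 2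
  set Y0 := eval x (pderiv 1 (pderiv 2 B)) with hY0
  set Y1 := eval x (pderiv 0 (pderiv 2 B)) with hY1
  set Y2 := eval x (pderiv 0 (pderiv 1 B)) with hY2
  constructor
  · intro hz
    have r1 : x 1 * Y2 + x 2 * Y1 = 0 := by rw [← e0]; exact hz 0
    have r2 : x 0 * Y2 + x 2 * Y0 = 0 := by rw [← e1]; exact hz 1
    have r3 : x 0 * Y1 + x 1 * Y0 = 0 := by rw [← e2]; exact hz 2
    have hex : ∃ i, x i ≠ 0 := by
      by_contra h
      push_neg at h
      exact hx (funext h)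
    obtain ⟨i, hi⟩ := hex
    have key : ∀ c : K, (Y0 = c * x 0 ∧ Y1 = c * x 1 ∧ Y2 = c * x 2) →
        ∃ c' : K, (Matrix.of ![a0, a1, a2]).mulVec (fun l => x l ^ 2) = c' • x := by
      rintro c ⟨k0, k1, k2⟩
      refine ⟨c, funext fun j => ?_⟩
      rcases hcases j with rfl | rfl | rfl
      · rw [hm0]; simpa using k0
      · rw [hm1]; simpa using k1
      · rw [hm2]; simpa using k2
    rcases hcases i with rfl | rfl | rfl
    · refine key (Y0 / x 0) ⟨by field_simp, ?_, ?_⟩ <;> field_simp <;>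
        first
          | linear_combination r1 - x 2 * Y1 * htwo
          | linear_combination - r1 + x 2 * Y1 * htwo
          | linear_combination r2 - x 2 * Y0 * htwo
          | linear_combination - r2 + x 2 * Y0 * htwo
          | linear_combination r3 - x 1 * Y0 * htwo
          | linear_combination - r3 + x 1 * Y0 * htwo
          | linear_combination r1 - x 1 * Y2 * htwo
          | linear_combination - r1 + x 1 * Y2 * htwo
          | linear_combination r2 - x 0 * Y2 * htwo
          | linear_combination - r2 + x 0 * Y2 * htwo
          | linear_combination r3 - x 0 * Y1 * htwo
          | linear_combination - r3 + x 0 * Y1 * htwo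
    · refine key (Y1 / x 1) ⟨?_, by field_simp, ?_⟩ <;> field_simp <;>
        first
          | linear_combination r1 - x 2 * Y1 * htwo
          | linear_combination - r1 + x 2 * Y1 * htwo
          | linear_combination r2 - x 2 * Y0 * htwo
          | linear_combination - r2 + x 2 * Y0 * htwo
          | linear_combination r3 - x 1 * Y0 * htwo
          | linear_combination - r3 + x 1 * Y0 * htwo
          | linear_combination r1 - x 1 * Y2 * htwo
          | linear_combination - r1 + x 1 * Y2 * htwo
          | linear_combination r2 - x 0 * Y2 * htwo
          | linear_combination - r2 + x 0 * Y2 * htwo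
          | linear_combination r3 - x 0 * Y1 * htwo
          | linear_combination - r3 + x 0 * Y1 * htwo
    · refine key (Y2 / x 2) ⟨?_, ?_, by field_simp⟩ <;> field_simp <;>
        first
          | linear_combination r1 - x 2 * Y1 * htwo
          | linear_combination - r1 + x 2 * Y1 * htwo
          | linear_combination r2 - x 2 * Y0 * htwo
          | linear_combination - r2 + x 2 * Y0 * htwo
          | linear_combination r3 - x 1 * Y0 * htwo
          | linear_combination - r3 + x 1 * Y0 * htwo
          | linear_combination r1 - x 1 * Y2 * htwo
          | linear_combination - r1 + x 1 * Y2 * htwo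
          | linear_combination r2 - x 0 * Y2 * htwo
          | linear_combination - r2 + x 0 * Y2 * htwo
          | linear_combination r3 - x 0 * Y1 * htwo
          | linear_combination - r3 + x 0 * Y1 * htwo
  · rintro ⟨c, hc⟩
    have k0 : Y0 = c * x 0 := by
      have := congrFun hc 0
      rw [hm0] at this
      simpa using this
    have k1 : Y1 = c * x 1 := by
      have := congrFun hc 1
      rw [hm1] at this
      simpa using this
    have k2 : Y2 = c * x 2 := by
      have := congrFun hc 2
      rw [hm2] at this
      simpa using this
    intro i
    rcases hcases i with rfl | rfl | rfl
    · rw [e0, k1, k2]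
      linear_combination x 1 * x 2 * c * htwo
    · rw [e1, k0, k2]
      linear_combination x 0 * x 2 * c * htwo
    · rw [e2, k0, k1]
      linear_combination x 0 * x 1 * c * htwo

lemma sqHom_apply' : True := trivial

end AuxPoly

noncomputable section AuxCount

variable {K : Type*} [Field K] [IsAlgClosed K] [CharP K 2]

/-- squaring as an additive hom in char 2 -/
def sqHom : (Fin 3 → K) →+ (Fin 3 → K) where
  toFun x := fun i => x i ^ 2
  map_zero' := by funext i; simp
  map_add' x y := by funext i; exact CharTwo.add_sq _ _

lemma sqHom_smul (c : K) (x : Fin 3 → K) : sqHom (c • x) = (c ^ 2) • sqHom x := by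
  funext i; simp [sqHom, mul_pow]

lemma sqHom_ne_zero {x : Fin 3 → K} (hx : x ≠ 0) : sqHom x ≠ (0 : Fin 3 → K) := by
  intro h
  apply hx
  funext i
  have := congrFun h i
  simpa [sqHom, pow_eq_zero_iff] using this

theorem counting (L : (Fin 3 → K) →ₗ[K] (Fin 3 → K))
    (hfin : {p : Projectivization K (Fin 3 → K) | ∃ c : K, L (sqHom p.rep) = c • p.rep}.Finite) :
    {p : Projectivization K (Fin 3 → K) | ∃ c : K, L (sqHom p.rep) = c • p.rep}.ncard ≤ 7 := by
  classical
  set P := {p : Projectivization K (Fin 3 → K) | ∃ c : K, L (sqHom p.rep) = c • p.rep} with hP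
  set Ψ : (Fin 3 → K) →+ (Fin 3 → K) := L.toAddMonoidHom.comp sqHom with hΨ
  have hΨdef : ∀ x, Ψ x = L (sqHom x) := fun x => rfl
  have hΨsmul : ∀ (c : K) (x), Ψ (c • x) = (c ^ 2) • Ψ x := by
    intro c x
    rw [hΨdef, hΨdef, sqHom_smul, map_smul]
  -- dichotomy for the kernel of Ψ
  have hdep : ∀ u w : Fin 3 → K, u ≠ 0 → Ψ u = 0 → Ψ w = 0 → ∃ c : K, w = c • u := by
    intro u w hu hΨu hΨw
    by_contra hw
    push_neg at hw
    -- pair independence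
    have hind : ∀ a b : K, a • u + b • w = 0 → a = 0 ∧ b = 0 := by
      intro a b hab
      by_cases hb : b = 0
      · subst hb
        rw [zero_smul, add_zero, smul_eq_zero] at hab
        exact ⟨hab.resolve_right hu, rfl⟩
      · exfalso
        apply hw (a / b)
        have h1 : b • w = a • u := by
          rw [add_eq_zero_iff_eq_neg, CharTwo.neg_eq] at hab
          exact hab.symm
        have : w = b⁻¹ • (a • u) := by
          rw [← h1, smul_smul, inv_mul_cancel₀ hb, one_smul]
        rw [this, smul_smul, div_eq_inv_mul]
    -- infinitely many projective points in P
    have hinf : P.Infinite := by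
      have hmem : ∀ t : K, u + t • w ≠ 0 := by
        intro t h
        have := hind 1 t (by simpa using h)
        exact one_ne_zero this.1
      set g : K → Projectivization K (Fin 3 → K) :=
        fun t => Projectivization.mk K (u + t • w) (hmem t) with hg
      refine Set.infinite_of_injective_forall_mem (f := g) ?_ ?_
      · intro t t' htt'
        rw [hg] at htt'
        simp only at htt'
        rw [Projectivization.mk_eq_mk_iff' K _ _ (hmem t) (hmem t')] at htt'
        obtain ⟨a, ha⟩ := htt'
        have h2 : (a - 1) • u + (a * t' - t) • w = 0 := by
          have : a • (u + t' • w) - (u + t • w) = 0 := by rw [ha, sub_self]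
          rw [← this]
          module
        obtain ⟨h3, h4⟩ := hind _ _ h2
        have ha1 : a = 1 := sub_eq_zero.mp h3
        rw [ha1, one_mul] at h4
        exact (sub_eq_zero.mp h4).symm
      · intro t
        rw [hP]
        refine ⟨0, ?_⟩
        obtain ⟨a, ha⟩ := Projectivization.exists_smul_eq_mk_rep K (u + t • w) (hmem t)
        have hz : Ψ ((a : K) • (u + t • w)) = 0 := by
          rw [hΨsmul, map_add, hΨu, hΨsmul, hΨw, smul_zero, add_zero, smul_zero]
        rw [← hΨdef, ← ha, Units.smul_def, hz, zero_smul]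
    exact hinf hfin
  -- the set of fixed vectors of Ψ
  set V : Set (Fin 3 → K) := {v | Ψ v = v} with hV
  have hVrange : V ⊆ (LinearMap.range L : Set (Fin 3 → K)) := by
    intro v hv
    exact ⟨sqHom v, hv⟩
  obtain ⟨s, hsub, hspan, hind2⟩ := exists_linearIndependent K V
  have hsfin : s.Finite := hind2.setFinite
  letI := hsfin.fintype
  set F : Finset (Fin 3 → K) := s.toFinset with hF
  have hFcoe : (F : Set (Fin 3 → K)) = s := Set.coe_toFinset s
  -- every fixed vector is a subset sum of F
  have hrep : ∀ v ∈ V, ∃ t ∈ F.powerset, v = t.sum id := by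
    intro v hv
    have hvspan : v ∈ Submodule.span K s := by
      rw [hspan]; exact Submodule.subset_span hv
    obtain ⟨c, hcsupp, hcsum⟩ := Submodule.mem_span_set.mp hvspan
    set c' : (Fin 3 → K) →₀ K := c.mapRange (· ^ 2) (by norm_num) with hc'
    have hΨfix : ∀ u ∈ c.support, Ψ u = u := by
      intro u hu
      exact hsub (hcsupp hu)
    have hev' : Finsupp.linearCombination K _root_.id c' = v := by
      rw [Finsupp.linearCombination_apply, hc',
        Finsupp.sum_mapRange_index (fun a => zero_smul K (_root_.id a))]
      have h1 : (c.sum fun u r => (r ^ 2) • (_root_.id u)) = Ψ (c.sum fun u r => r • u) := by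
        rw [map_finsuppSum]
        apply Finsupp.sum_congr
        intro u hu
        rw [hΨsmul, hΨfix u hu]
        rfl
      rw [h1, hcsum]
      exact hv
    have hev : Finsupp.linearCombination K _root_.id c = v := by
      rw [Finsupp.linearCombination_apply]
      exact hcsum
    have hcc : c' = c := by
      have hmem' : c' ∈ Finsupp.supported K K s := by
        rw [Finsupp.mem_supported]
        refine subset_trans ?_ hcsupp
        exact_mod_cast Finsupp.support_mapRange
      have hmem : c ∈ Finsupp.supported K K s := by
        rw [Finsupp.mem_supported]; exact hcsupp
      have hdiff : c' - c ∈ Finsupp.supported K K s := sub_mem hmem' hmem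
      have h0 : Finsupp.linearCombination K _root_.id (c' - c) = 0 := by
        rw [map_sub, hev', hev, sub_self]
      have := (linearIndepOn_iff (v := _root_.id)).mp hind2 (c' - c) hdiff h0
      exact sub_eq_zero.mp this
    have hbool : ∀ u ∈ c.support, c u = 1 := by
      intro u hu
      have h1 : (c u) ^ 2 = c u := by
        have := DFunLike.congr_fun hcc u
        rwa [hc', Finsupp.mapRange_apply] at this
      have h2 : c u ≠ 0 := Finsupp.mem_support_iff.mp hu
      have h3 : c u * (c u - 1) = 0 := by ring_nf; linear_combination h1
      rcases mul_eq_zero.mp h3 with h | h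
      · exact absurd h h2
      · exact sub_eq_zero.mp h
    refine ⟨c.support, ?_, ?_⟩
    · rw [Finset.mem_powerset, ← Finset.coe_subset, hFcoe]
      exact hcsupp
    · rw [← hcsum, Finsupp.sum]
      apply Finset.sum_congr rfl
      intro u hu
      rw [hbool u hu, one_smul]
      rfl
  have hVsub : V ⊆ ↑(F.powerset.image fun t => t.sum _root_.id) := by
    intro v hv
    obtain ⟨t, ht, rfl⟩ := hrep v hv
    exact_mod_cast Finset.mem_image_of_mem _ ht
  have hVfin : V.Finite := (Finset.finite_toSet _).subset hVsub
  have hV0sub : V \ {0} ⊆ ↑((F.powerset.erase ∅).image fun t => t.sum _root_.id) := by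
    rintro v ⟨hv, hv0⟩
    obtain ⟨t, ht, rfl⟩ := hrep v hv
    have htne : t ≠ ∅ := by
      rintro rfl
      exact hv0 (by simp)
    exact_mod_cast Finset.mem_image_of_mem _ (Finset.mem_erase.mpr ⟨htne, ht⟩)
  have hV0card : (V \ {0}).ncard ≤ 2 ^ F.card - 1 := by
    refine le_trans (Set.ncard_le_ncard hV0sub (Finset.finite_toSet _)) ?_
    rw [Set.ncard_coe_finset]
    refine le_trans Finset.card_image_le ?_
    rw [Finset.card_erase_of_mem (Finset.mem_powerset.mpr (Finset.empty_subset F)),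
      Finset.card_powerset]
  have hFcard : F.card ≤ Module.finrank K (LinearMap.range L) := by
    have h1 : Module.finrank K (Submodule.span K s) = F.card :=
      finrank_span_set_eq_card hind2
    rw [← h1]
    refine Submodule.finrank_mono ?_
    rw [hspan]
    exact Submodule.span_le.mpr hVrange
  -- split P
  set P0 : Set (Projectivization K (Fin 3 → K)) := {p | p ∈ P ∧ Ψ p.rep = 0} with hP0
  set P1 : Set (Projectivization K (Fin 3 → K)) := {p | p ∈ P ∧ Ψ p.rep ≠ 0} with hP1
  have hPsplit : P = P0 ∪ P1 := by
    ext p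
    simp only [Set.mem_union, hP0, hP1, Set.mem_setOf_eq]
    tauto
  have hsum : P.ncard ≤ P0.ncard + P1.ncard := by
    rw [hPsplit]
    exact Set.ncard_union_le _ _
  -- bound P1
  have hjunk : (fun _ => (1 : K)) ≠ (0 : Fin 3 → K) := by
    intro h
    simpa using congrFun h 0
  set f : (Fin 3 → K) → Projectivization K (Fin 3 → K) :=
    fun v => if h : v = 0 then Projectivization.mk K (fun _ => (1 : K)) hjunk
      else Projectivization.mk K v h with hf
  have hP1sub : P1 ⊆ f '' (V \ {0}) := by
    rintro p ⟨⟨c, hc⟩, hne⟩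
    have hcne : c ≠ 0 := by
      rintro rfl
      rw [zero_smul] at hc
      exact hne (by rw [hΨdef]; exact hc)
    set v : Fin 3 → K := c⁻¹ • p.rep with hv
    have hv0 : v ≠ 0 := smul_ne_zero (inv_ne_zero hcne) p.rep_nonzero
    have hvV : v ∈ V := by
      show Ψ v = v
      rw [hv, hΨsmul, hΨdef, hc, smul_smul]
      congr 1
      field_simp
    refine ⟨v, ⟨hvV, hv0⟩, ?_⟩
    rw [hf]
    simp only [dif_neg hv0]
    conv_rhs => rw [← p.mk_rep]
    rw [Projectivization.mk_eq_mk_iff' K v p.rep hv0 p.rep_nonzero]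
    exact ⟨c⁻¹, rfl⟩
  have hP1card : P1.ncard ≤ 2 ^ F.card - 1 := by
    refine le_trans (Set.ncard_le_ncard hP1sub ((hVfin.diff).image f)) ?_
    exact le_trans (Set.ncard_image_le (hVfin.diff)) hV0card
  -- bound P0 by cases on the kernel
  by_cases hker : ∀ z : Fin 3 → K, Ψ z = 0 → z = 0
  · have hP0empty : P0 = ∅ := by
      ext p
      simp only [hP0, Set.mem_setOf_eq, Set.mem_empty_iff_false, iff_false, not_and]
      intro _ h
      exact p.rep_nonzero (hker _ h)
    have h3 : F.card ≤ 3 := by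
      refine le_trans hFcard ?_
      refine le_trans (Submodule.finrank_le _) ?_
      simp [Module.finrank_pi]
    have : (2 : ℕ) ^ F.card ≤ 8 := by
      calc (2:ℕ) ^ F.card ≤ 2 ^ 3 := Nat.pow_le_pow_right (by norm_num) h3
      _ = 8 := by norm_num
    rw [hP0empty] at hsum
    simp only [Set.ncard_empty, zero_add] at hsum
    omega
  · push_neg at hker
    obtain ⟨z, hΨz, hz0⟩ := hker
    have hP0sub : P0 ⊆ {Projectivization.mk K z hz0} := by
      rintro p ⟨_, hp⟩
      obtain ⟨c, hcz⟩ := hdep z p.rep hz0 hΨz hp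
      simp only [Set.mem_singleton_iff]
      conv_lhs => rw [← p.mk_rep]
      rw [Projectivization.mk_eq_mk_iff' K p.rep z p.rep_nonzero hz0]
      exact ⟨c, hcz.symm⟩
    have hP0card : P0.ncard ≤ 1 := by
      refine le_trans (Set.ncard_le_ncard hP0sub (Set.finite_singleton _)) ?_
      simp
    have hkerpos : 0 < Module.finrank K (LinearMap.ker L) := by
      rw [Module.finrank_pos_iff]
      refine ⟨⟨⟨sqHom z, ?_⟩, 0, ?_⟩⟩
      · rw [LinearMap.mem_ker]
        exact hΨz
      · intro h
        exact sqHom_ne_zero hz0 (by simpa using congrArg Subtype.val h)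
    have h2 : F.card ≤ 2 := by
      refine le_trans hFcard ?_
      have := LinearMap.finrank_range_add_finrank_ker L
      rw [show Module.finrank K (Fin 3 → K) = 3 by simp [Module.finrank_pi]] at this
      omega
    have : (2 : ℕ) ^ F.card ≤ 4 := by
      calc (2:ℕ) ^ F.card ≤ 2 ^ 2 := Nat.pow_le_pow_right (by norm_num) h2
      _ = 4 := by norm_num
    omega

lemma sqHom_apply (x : Fin 3 → K) : sqHom x = fun i => x i ^ 2 := rfl

end AuxCount

/-- over an algebraically closed field of characteristic 2, the critical locus
of a homogeneous quartic in three variables, if finite, has at most 7 points. -/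
theorem stmt_4 (K : Type*) [Field K] [IsAlgClosed K] [CharP K 2]
    (B : MvPolynomial (Fin 3) K) (hB : B.IsHomogeneous 4)
    (hfin : {p : Projectivization K (Fin 3 → K) |
        ∀ i, eval p.rep (pderiv i B) = 0}.Finite) :
    {p : Projectivization K (Fin 3 → K) |
        ∀ i, eval p.rep (pderiv i B) = 0}.ncard ≤ 7 := by
  obtain ⟨N, hN⟩ := exists_matrix B hB
  have hset : {p : Projectivization K (Fin 3 → K) | ∀ i, eval p.rep (pderiv i B) = 0}
      = {p : Projectivization K (Fin 3 → K) | ∃ c : K, N.mulVecLin (sqHom p.rep) = c • p.rep} := by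
    ext p
    simp only [Set.mem_setOf_eq, Matrix.mulVecLin_apply, sqHom_apply]
    exact hN p.rep p.rep_nonzero
  rw [hset] at hfin ⊢
  exact counting N.mulVecLin hfin
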